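/- (Equality case of Berwald for conical functions) Let K be a convex body in ℝⁿ, 0 < γ₁ < γ₂, y₀ ∈ K, M > 0, and let f : K → [0,∞) be the function whose hypograph {(x,t) : x ∈ K, 0 ≤ t ≤ f(x)} equals conv(K×{0} ∪ {(y₀, M)}). Then ( C(γ₂+n,n)/vol(K) · ∫_K f^{γ₂} )^{1/γ₂} = ( C(γ₁+n,n)/vol(K) · ∫_K f^{γ₁} )^{1/γ₁}. -/

import Mathlib

open MeasureTheory Nat Set


lemma prod_fact (a : ℕ) : ∀ m : ℕ, a ! * ∏ j ∈ Finset.range m, (a + 1 + j) = (a + m)! := by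
  intro m
  induction m with
  | zero => simp
  | succ m ih =>
    rw [Finset.prod_range_succ, ← mul_assoc, ih]
    have h1 : a + (m + 1) = (a + m) + 1 := by ring
    rw [h1, Nat.factorial_succ]
    ring

lemma beta_nat (a n : ℕ) :
    ∫ x in (0:ℝ)..1, x ^ a * (1 - x) ^ n = (a ! * n ! : ℝ) / (a + n + 1)! := by
  have h := Complex.betaIntegral_eval_nat_add_one_right
    (u := (a : ℂ) + 1) (by simp [Complex.add_re]; positivity) n
  have hlhs : Complex.betaIntegral ((a : ℂ) + 1) ((n : ℂ) + 1)
      = ((∫ x in (0:ℝ)..1, x ^ a * (1 - x) ^ n : ℝ) : ℂ) := by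
    rw [Complex.betaIntegral]
    rw [show ((∫ x in (0:ℝ)..1, x ^ a * (1 - x) ^ n : ℝ) : ℂ)
        = ∫ x in (0:ℝ)..1, ((x ^ a * (1 - x) ^ n : ℝ) : ℂ)
      from (RCLike.intervalIntegral_ofReal (𝕜 := ℂ)).symm]
    apply intervalIntegral.integral_congr
    intro x _
    simp only [add_sub_cancel_right]
    rw [Complex.cpow_natCast, Complex.cpow_natCast]
    push_cast
    ring
  rw [hlhs] at h
  have hprod : (∏ j ∈ Finset.range (n + 1), ((a : ℂ) + 1 + j))
      = ((∏ j ∈ Finset.range (n + 1), (a + 1 + j) : ℕ) : ℂ) := by push_cast; ring_nf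
  have hfac : (a ! : ℂ) * ((∏ j ∈ Finset.range (n + 1), (a + 1 + j) : ℕ) : ℂ)
      = ((a + n + 1)! : ℂ) := by
    rw [← Nat.cast_mul, prod_fact a (n + 1)]
    norm_num [Nat.add_assoc]
  have hPne : ((∏ j ∈ Finset.range (n + 1), (a + 1 + j) : ℕ) : ℂ) ≠ 0 := by
    have : 0 < ∏ j ∈ Finset.range (n + 1), (a + 1 + j) :=
      Finset.prod_pos (fun j _ => by omega)
    exact_mod_cast this.ne'
  rw [hprod] at h
  have hfne : (((a + n + 1)! : ℕ) : ℂ) ≠ 0 := by exact_mod_cast (Nat.factorial_pos _).ne'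
  have hgoal : ((∫ x in (0:ℝ)..1, x ^ a * (1 - x) ^ n : ℝ) : ℂ)
      = ((a ! * n ! : ℕ) : ℂ) / (((a + n + 1)! : ℕ) : ℂ) := by
    rw [h, div_eq_div_iff hPne hfne]
    push_cast
    linear_combination (-(n ! : ℂ) * (a ! : ℂ)) * hprod - (n ! : ℂ) * hfac
  have h2 : ((∫ x in (0:ℝ)..1, x ^ a * (1 - x) ^ n : ℝ) : ℂ)
      = (((a ! * n ! : ℝ) / ((a + n + 1)! : ℝ) : ℝ) : ℂ) := by
    rw [hgoal]; push_cast; ring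
  exact Complex.ofReal_injective h2



/-- **Equality case of Berwald's inequality for conical functions.** Let `K ⊆ ℝⁿ` be a convex
body, `0 < γ₁ < γ₂`, `y₀ ∈ K`, `M > 0`, and let `f : K → [0,∞)` be the function whose
hypograph `{(x,t) : x ∈ K, 0 ≤ t ≤ f(x)}` equals `conv(K×{0} ∪ {(y₀,M)})`. Then both sides of
Berwald's inequality coincide. -/
theorem berwald_equality_conical {n : ℕ} (K : Set (Fin n → ℝ))
    (hconv : Convex ℝ K) (hcomp : IsCompact K) (hint : (interior K).Nonempty)
    (γ₁ γ₂ : ℕ) (hγ₁ : 0 < γ₁) (hγ : γ₁ < γ₂)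
    (y₀ : Fin n → ℝ) (hy₀ : y₀ ∈ K) (M : ℝ) (hM : 0 < M)
    (f : (Fin n → ℝ) → ℝ) (hf0 : ∀ x ∈ K, 0 ≤ f x)
    (hhyp : {p : (Fin n → ℝ) × ℝ | p.1 ∈ K ∧ 0 ≤ p.2 ∧ p.2 ≤ f p.1} =
      convexHull ℝ ((K ×ˢ ({0} : Set ℝ)) ∪ {(y₀, M)})) :
    ((((γ₂ + n).choose n : ℝ) / (volume K).toReal * ∫ x in K, f x ^ γ₂) ^ ((γ₂ : ℝ)⁻¹)) =
      ((((γ₁ + n).choose n : ℝ) / (volume K).toReal * ∫ x in K, f x ^ γ₁) ^ ((γ₁ : ℝ)⁻¹)) := by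
  have hKne : K.Nonempty := ⟨y₀, hy₀⟩
  -- the convex hull as a convex join
  have hullEq : convexHull ℝ ((K ×ˢ ({0} : Set ℝ)) ∪ {(y₀, M)}) =
      convexJoin ℝ {((y₀, M) : (Fin n → ℝ) × ℝ)} (K ×ˢ ({0} : Set ℝ)) := by
    rw [Set.union_singleton, convexHull_insert (hKne.prod (Set.singleton_nonempty _)),
      (hconv.prod (convex_singleton (0:ℝ))).convexHull_eq]
  -- f ≤ M on K
  have hfM : ∀ x ∈ K, f x ≤ M := by
    intro x hx
    have hmem : ((x, f x) : (Fin n → ℝ) × ℝ) ∈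
        {p : (Fin n → ℝ) × ℝ | p.1 ∈ K ∧ 0 ≤ p.2 ∧ p.2 ≤ f p.1} :=
      ⟨hx, hf0 x hx, le_rfl⟩
    rw [hhyp] at hmem
    have hsub : convexHull ℝ ((K ×ˢ ({0} : Set ℝ)) ∪ {(y₀, M)}) ⊆ K ×ˢ Icc 0 M := by
      apply convexHull_min _ (hconv.prod (convex_Icc 0 M))
      rintro ⟨z, t⟩ (⟨hz, ht⟩ | hp)
      · exact ⟨hz, by simp at ht; simp [ht, hM.le]⟩
      · simp only [Set.mem_singleton_iff, Prod.mk.injEq] at hp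
        exact ⟨by rw [hp.1]; exact hy₀, by rw [hp.2]; exact ⟨hM.le, le_rfl⟩⟩
    exact (hsub hmem).2.2
  set F : (Fin n → ℝ) → ℝ := K.indicator f with hF
  have hF0 : ∀ x, 0 ≤ F x := by
    intro x
    by_cases hx : x ∈ K
    · rw [hF, Set.indicator_of_mem hx]; exact hf0 x hx
    · rw [hF, Set.indicator_of_notMem hx]
  have hFM : ∀ x, F x ≤ M := by
    intro x
    by_cases hx : x ∈ K
    · rw [hF, Set.indicator_of_mem hx]; exact hfM x hx
    · rw [hF, Set.indicator_of_notMem hx]; exact hM.le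
  -- superlevel sets
  have hset : ∀ t : ℝ, 0 < t → t ≤ M →
      F ⁻¹' Ici t = AffineMap.homothety y₀ (1 - t / M) '' K := by
    intro t ht htM
    have hc0 : 0 ≤ t / M := div_nonneg ht.le hM.le
    have hc1 : t / M ≤ 1 := (div_le_one hM).2 htM
    ext x
    simp only [Set.mem_preimage, Set.mem_Ici]
    constructor
    · intro hxt
      have hxK : x ∈ K := by
        by_contra hxK
        rw [hF, Set.indicator_of_notMem hxK] at hxt
        exact absurd hxt (not_le.2 ht)
      rw [hF, Set.indicator_of_mem hxK] at hxt
      have hmem : ((x, t) : (Fin n → ℝ) × ℝ) ∈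
          {p : (Fin n → ℝ) × ℝ | p.1 ∈ K ∧ 0 ≤ p.2 ∧ p.2 ≤ f p.1} := ⟨hxK, ht.le, hxt⟩
      rw [hhyp, hullEq, mem_convexJoin] at hmem
      obtain ⟨p, hp, q, hq, hseg⟩ := hmem
      simp only [Set.mem_singleton_iff] at hp
      subst hp
      obtain ⟨z, s⟩ := q
      obtain ⟨hzK, hs⟩ := hq
      simp only [Set.mem_singleton_iff] at hs
      subst hs
      obtain ⟨a, b, ha, hb, hab, habeq⟩ := hseg
      have h2 : a * M = t := by
        have := congrArg Prod.snd habeq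
        simpa using this
      have h1 : a • y₀ + b • z = x := by
        have := congrArg Prod.fst habeq
        simpa using this
      have haval : a = t / M := by field_simp [h2.symm]; exact h2
      have hbval : b = 1 - t / M := by rw [← hab, haval]; ring
      refine ⟨z, hzK, ?_⟩
      rw [AffineMap.homothety_apply]
      simp only [vsub_eq_sub, vadd_eq_add]
      rw [← h1, haval, hbval]
      module
    · rintro ⟨z, hzK, rfl⟩
      have hmem : (AffineMap.homothety y₀ (1 - t / M) z, t) ∈
          convexHull ℝ ((K ×ˢ ({0} : Set ℝ)) ∪ {(y₀, M)}) := by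
        apply segment_subset_convexHull (x := ((y₀, M) : (Fin n → ℝ) × ℝ))
          (y := ((z, 0) : (Fin n → ℝ) × ℝ))
        · exact Set.mem_union_right _ rfl
        · exact Set.mem_union_left _ ⟨hzK, rfl⟩
        · refine ⟨t / M, 1 - t / M, hc0, by linarith, by ring, ?_⟩
          rw [Prod.ext_iff]
          constructor
          · simp only [Prod.smul_mk, Prod.mk_add_mk]
            rw [AffineMap.homothety_apply]
            simp only [vsub_eq_sub, vadd_eq_add]
            module
          · simp only [Prod.smul_mk, Prod.mk_add_mk, smul_eq_mul]
            field_simp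
            ring
      rw [← hhyp] at hmem
      obtain ⟨hK', _, hle⟩ := hmem
      rw [hF, Set.indicator_of_mem hK']
      exact hle
  -- measurability of F
  have hFpre : ∀ t : ℝ, 0 < t → F ⁻¹' Ici t ⊆ K := by
    intro t ht x hx
    by_contra hxK
    rw [Set.mem_preimage, Set.mem_Ici, hF, Set.indicator_of_notMem hxK] at hx
    exact absurd hx (not_le.2 ht)
  have hFmeas : Measurable F := by
    apply measurable_of_Ici
    intro t
    rcases le_or_gt t 0 with ht | ht
    · have : F ⁻¹' Ici t = Set.univ :=
        Set.eq_univ_of_forall fun x => le_trans ht (hF0 x)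
      rw [this]; exact MeasurableSet.univ
    rcases le_or_gt t M with htM | htM
    · rw [hset t ht htM]
      exact (hcomp.image (AffineMap.homothety_continuous y₀ (1 - t / M))).measurableSet
    · have : F ⁻¹' Ici t = ∅ := by
        apply Set.eq_empty_of_forall_notMem
        intro x hx
        rw [Set.mem_preimage, Set.mem_Ici] at hx
        exact absurd (lt_of_le_of_lt (hx.trans (hFM x)) htM) (lt_irrefl t)
      rw [this]; exact MeasurableSet.empty
  have hKmeas : MeasurableSet K := hcomp.measurableSet
  have hvolK_lt : volume K < ⊤ := hcomp.measure_lt_top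
  have hvolK_pos : (0 : ENNReal) < volume K := Measure.measure_pos_of_nonempty_interior _ hint
  have hV : 0 < (volume K).toReal := ENNReal.toReal_pos hvolK_pos.ne' hvolK_lt.ne
  -- volume of superlevel sets
  have hvol : ∀ t : ℝ, 0 < t → t ≤ M →
      volume (F ⁻¹' Ici t) = ENNReal.ofReal ((1 - t / M) ^ n) * volume K := by
    intro t ht htM
    rw [hset t ht htM, Measure.addHaar_image_homothety]
    congr 2
    rw [abs_of_nonneg]
    · congr 1
      exact Module.finrank_fin_fun ℝ
    · have h1 : t / M ≤ 1 := (div_le_one hM).2 htM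
      exact pow_nonneg (by linarith) _
  -- the key computation
  have key : ∀ γ : ℕ, 0 < γ →
      (((γ + n).choose n : ℝ) / (volume K).toReal * ∫ x in K, f x ^ γ) = M ^ γ := by
    intro γ hγpos
    obtain ⟨a, rfl⟩ : ∃ a, γ = a + 1 := ⟨γ - 1, (Nat.succ_pred_eq_of_pos hγpos).symm⟩
    have hstep1 : (∫ x in K, f x ^ (a + 1)) = ∫ x in K, F x ^ (a + 1) := by
      apply setIntegral_congr_fun hKmeas
      intro x hx
      simp only [hF, Set.indicator_of_mem hx]
    -- integrability of F ^ (a+1) on K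
    have hFint : Integrable (fun x => F x ^ (a + 1)) (volume.restrict K) := by
      refine Integrable.mono' (g := fun _ => M ^ (a + 1))
        (integrableOn_const hvolK_lt.ne)
        (hFmeas.pow_const _).aestronglyMeasurable
        (Filter.Eventually.of_forall fun x => ?_)
      rw [Real.norm_eq_abs, abs_of_nonneg (pow_nonneg (hF0 x) _)]
      exact pow_le_pow_left₀ (hF0 x) (hFM x) _
    -- layer cake
    have hlayer := lintegral_comp_eq_lintegral_meas_le_mul (volume.restrict K)
      (f := F) (g := fun t => ((a : ℝ) + 1) * t ^ a)
      (Filter.Eventually.of_forall hF0) hFmeas.aemeasurable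
      (fun t _ => (Continuous.intervalIntegrable (continuous_const.mul (continuous_pow a)) 0 t))
      ((ae_restrict_iff' measurableSet_Ioi).2 (Filter.Eventually.of_forall
        (fun t ht => by have : (0:ℝ) < t := ht; positivity)))
    have hinner : ∀ s : ℝ, (∫ t in (0:ℝ)..s, ((a : ℝ) + 1) * t ^ a) = s ^ (a + 1) := by
      intro s
      rw [intervalIntegral.integral_const_mul, integral_pow]
      have : ((a : ℝ) + 1) ≠ 0 := by positivity
      field_simp
      simp
    simp_rw [hinner] at hlayer
    have hLHS : (∫⁻ x, ENNReal.ofReal (F x ^ (a + 1)) ∂(volume.restrict K))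
        = ENNReal.ofReal (∫ x in K, F x ^ (a + 1)) :=
      (ofReal_integral_eq_lintegral_ofReal hFint
        (Filter.Eventually.of_forall fun x => pow_nonneg (hF0 x) _)).symm
    -- compute the RHS of the layer cake formula
    set G : ℝ → ℝ := fun t => (1 - t / M) ^ n * (((a : ℝ) + 1) * t ^ a) with hG
    have hGcont : Continuous G :=
      (((continuous_const.sub (continuous_id.div_const M)).pow n).mul
        (continuous_const.mul (continuous_pow a)))
    have hmeasle : ∀ t : ℝ, 0 < t →
        (volume.restrict K) {x | t ≤ F x} = volume (F ⁻¹' Ici t) := by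
      intro t ht
      rw [show {x | t ≤ F x} = F ⁻¹' Ici t from rfl,
        Measure.restrict_apply (hFmeas measurableSet_Ici),
        Set.inter_eq_left.2 (hFpre t ht)]
    have hRHS : (∫⁻ t in Ioi (0:ℝ), (volume.restrict K) {x | t ≤ F x} *
          ENNReal.ofReal (((a : ℝ) + 1) * t ^ a))
        = ENNReal.ofReal (∫ t in Ioc (0:ℝ) M, G t) * volume K := by
      rw [← Ioc_union_Ioi_eq_Ioi hM.le,
        lintegral_union measurableSet_Ioi (Ioc_disjoint_Ioi le_rfl)]
      have h2 : (∫⁻ t in Ioi M, (volume.restrict K) {x | t ≤ F x} *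
          ENNReal.ofReal (((a : ℝ) + 1) * t ^ a)) = 0 := by
        rw [← lintegral_zero (μ := volume.restrict (Ioi M))]
        apply setLIntegral_congr_fun measurableSet_Ioi
        intro t ht
        dsimp only
        have hpre : F ⁻¹' Ici t = ∅ := by
          apply Set.eq_empty_of_forall_notMem
          intro x hx
          rw [Set.mem_preimage, Set.mem_Ici] at hx
          exact absurd (lt_of_le_of_lt (hx.trans (hFM x)) ht) (lt_irrefl t)
        rw [hmeasle t (hM.trans ht), hpre, measure_empty, zero_mul]
      rw [h2, add_zero]
      have h1 : (∫⁻ t in Ioc (0:ℝ) M, (volume.restrict K) {x | t ≤ F x} *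
          ENNReal.ofReal (((a : ℝ) + 1) * t ^ a))
          = ∫⁻ t in Ioc (0:ℝ) M, ENNReal.ofReal (G t) * volume K := by
        apply setLIntegral_congr_fun measurableSet_Ioc
        intro t ht
        dsimp only
        have h1M : t / M ≤ 1 := (div_le_one hM).2 ht.2
        rw [hmeasle t ht.1, hvol t ht.1 ht.2, mul_right_comm,
          ← ENNReal.ofReal_mul (pow_nonneg (by linarith) _)]
      rw [h1, lintegral_mul_const _ (hGcont.measurable.ennreal_ofReal),
        ofReal_integral_eq_lintegral_ofReal (hGcont.integrableOn_Ioc)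
          ((ae_restrict_iff' measurableSet_Ioc).2 (Filter.Eventually.of_forall
            (fun t ht => by
              have h1M : t / M ≤ 1 := (div_le_one hM).2 ht.2
              have h0t : (0:ℝ) < t := ht.1
              simp only [hG]
              exact mul_nonneg (pow_nonneg (by linarith) _) (by positivity))))]
    rw [hLHS, hRHS] at hlayer
    -- pass to real numbers
    have hJnn : 0 ≤ ∫ t in Ioc (0:ℝ) M, G t := by
      apply setIntegral_nonneg measurableSet_Ioc
      intro t ht
      have h1M : t / M ≤ 1 := (div_le_one hM).2 ht.2
      have h0t : (0:ℝ) < t := ht.1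
      simp only [hG]
      exact mul_nonneg (pow_nonneg (by linarith) _) (by positivity)
    have hreal : (∫ x in K, F x ^ (a + 1))
        = (∫ t in Ioc (0:ℝ) M, G t) * (volume K).toReal := by
      have := congrArg ENNReal.toReal hlayer
      rwa [ENNReal.toReal_ofReal (setIntegral_nonneg hKmeas
          (fun x _ => pow_nonneg (hF0 x) _)),
        ENNReal.toReal_mul, ENNReal.toReal_ofReal hJnn] at this
    -- evaluate the one-dimensional integral
    have hJ : (∫ t in Ioc (0:ℝ) M, G t)
        = M ^ (a + 1) * ((((a : ℝ) + 1) * (a ! * n ! : ℝ)) / ((a + n + 1)! : ℝ)) := by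
      rw [← intervalIntegral.integral_of_le hM.le]
      have hsub := intervalIntegral.integral_comp_mul_left (a := (0:ℝ)) (b := 1)
        (c := M) (f := G) hM.ne'
      rw [mul_zero, mul_one, smul_eq_mul] at hsub
      have hGM : (∫ x in (0:ℝ)..1, G (M * x))
          = (((a : ℝ) + 1) * M ^ a) * ∫ x in (0:ℝ)..1, x ^ a * (1 - x) ^ n := by
        rw [← intervalIntegral.integral_const_mul]
        apply intervalIntegral.integral_congr
        intro x _
        simp only [hG]
        rw [mul_pow]
        have hx : M * x / M = x := by field_simp
        rw [hx]
        ring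
      have hMne : M ≠ 0 := hM.ne'
      have : (∫ t in (0:ℝ)..M, G t) = M * ∫ x in (0:ℝ)..1, G (M * x) := by
        rw [hsub]
        field_simp
      rw [this, hGM, beta_nat]
      rw [pow_succ]
      ring
    rw [hstep1, hreal, hJ]
    -- final algebra
    have hch : ((a + 1 + n).choose n) * n ! * (a + 1)! = (a + 1 + n)! := by
      have := Nat.choose_mul_factorial_mul_factorial (Nat.le_add_left n (a + 1))
      simpa [Nat.add_sub_cancel] using this
    have hch' : (((a + 1 + n).choose n : ℝ)) * (n ! : ℝ) * ((a + 1)! : ℝ)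
        = ((a + 1 + n)! : ℝ) := by exact_mod_cast hch
    have hfacc : ((a + 1)! : ℝ) = ((a : ℝ) + 1) * (a ! : ℝ) := by
      rw [Nat.factorial_succ]; push_cast; ring
    have he1 : ((a + n + 1)! : ℝ) = ((a + 1 + n)! : ℝ) := by
      congr 2
      omega
    rw [he1]
    rw [hfacc] at hch'
    have hne1 : ((a + 1 + n)! : ℝ) ≠ 0 := by
      exact_mod_cast (Nat.factorial_pos _).ne'
    field_simp
    linear_combination hch'
  rw [key γ₁ hγ₁, key γ₂ (hγ₁.trans hγ),
    Real.pow_rpow_inv_natCast hM.le hγ₁.ne',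
    Real.pow_rpow_inv_natCast hM.le (hγ₁.trans hγ).ne']
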